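/- arXiv:2105.13206 — 2 statements merged into one kernel-verified Lean document; each statement's English description precedes it below -/
import Mathlib

section
/- Let R, n be positive integers, q_A, q_D ∈ [0,1), and let Δ be an n×n real symmetric positive semidefinite matrix. For each k ∈ {1,…,R} and ℓ ∈ {1,2,3}, let A_{ℓ,k} be an n×n real symmetric matrix, D_{ℓ,k} an n×n real diagonal matrix, and a⁰_{ℓ,k} > 0, d⁰_{ℓ,k} > 0 real constants satisfying (1−q_A)·a⁰_{ℓ,k}•Δ ≼ A_{ℓ,k} ≼ (1+q_A)·a⁰_{ℓ,k}•Δ and (1−q_D)·d⁰_{ℓ,k}•I ≼ D_{ℓ,k} ≼ (1+q_D)·d⁰_{ℓ,k}•I. Define A := Σ_{k=1}^R ( A_{1,k}⊗D_{2,k}⊗D_{3,k} + D_{1,k}⊗A_{2,k}⊗D_{3,k} + D_{1,k}⊗D_{2,k}⊗A_{3,k} ), the anisotropy factors a_ℓ⁰ := Σ_{k=1}^R a⁰_{ℓ,k} · ∏_{m∈{1,2,3}, m≠ℓ} d⁰_{m,k}, and A₁ := a₁⁰•(Δ⊗I⊗I) + a₂⁰•(I⊗Δ⊗I) + a₃⁰•(I⊗I⊗Δ).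 Then (1−q_A)(1−q_D)²•A₁ ≼ A ≼ (1+q_A)(1+q_D)²•A₁. (Lemma 3.1, estimate (3.6) for the anisotropic-Laplacian preconditioner matrix A₁, case d = 3.) -/
open Matrix Kronecker

section Helpers
variable {m p : Type*} [Fintype m] [Fintype p] [DecidableEq m] [DecidableEq p]

lemma psd_smul {c : ℝ} (hc : 0 ≤ c)
    {M : Matrix m m ℝ} (hM : M.PosSemidef) : (c • M).PosSemidef := by
  constructor
  · unfold Matrix.IsHermitian
    rw [conjTranspose_smul, hM.1]
    simp
  · intro x
    have := hM.2 x
    exact (hM.smul hc).2 x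

lemma psd_kron {M : Matrix m m ℝ} {N : Matrix p p ℝ} (hM : M.PosSemidef) (hN : N.PosSemidef) :
    (M ⊗ₖ N).PosSemidef := by
  exact hM.kronecker hN

lemma sub_kron (X Y : Matrix m m ℝ) (Z : Matrix p p ℝ) :
    (X - Y) ⊗ₖ Z = X ⊗ₖ Z - Y ⊗ₖ Z := by
  ext ⟨i, j⟩ ⟨k, l⟩
  simp [Matrix.kroneckerMap_apply, sub_mul]

lemma kron_sub (X : Matrix m m ℝ) (Y Z : Matrix p p ℝ) :
    X ⊗ₖ (Y - Z) = X ⊗ₖ Y - X ⊗ₖ Z := by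
  ext ⟨i, j⟩ ⟨k, l⟩
  simp [Matrix.kroneckerMap_apply, mul_sub]

lemma psd_sum {ι : Type*} (s : Finset ι) (f : ι → Matrix m m ℝ)
    (h : ∀ k ∈ s, (f k).PosSemidef) : (∑ k ∈ s, f k).PosSemidef :=
  Finset.sum_induction f _ (fun _ _ ha hb => ha.add hb) Matrix.PosSemidef.zero h

lemma kron3_le {X1 X2 X3 Y1 Y2 Y3 : Matrix m m ℝ}
    (hX1 : X1.PosSemidef) (hX2 : X2.PosSemidef)
    (hY2 : Y2.PosSemidef) (hY3 : Y3.PosSemidef)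
    (h1 : (Y1 - X1).PosSemidef) (h2 : (Y2 - X2).PosSemidef) (h3 : (Y3 - X3).PosSemidef) :
    (Y1 ⊗ₖ Y2 ⊗ₖ Y3 - X1 ⊗ₖ X2 ⊗ₖ X3).PosSemidef := by
  have key : Y1 ⊗ₖ Y2 ⊗ₖ Y3 - X1 ⊗ₖ X2 ⊗ₖ X3 =
      ((Y1 - X1) ⊗ₖ Y2) ⊗ₖ Y3 + (X1 ⊗ₖ (Y2 - X2)) ⊗ₖ Y3 + (X1 ⊗ₖ X2) ⊗ₖ (Y3 - X3) := by
    rw [sub_kron, kron_sub, sub_kron, sub_kron, kron_sub]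
    abel
  rw [key]
  exact ((psd_kron (psd_kron h1 hY2) hY3).add (psd_kron (psd_kron hX1 h2) hY3)).add
    (psd_kron (psd_kron hX1 hX2) h3)

lemma smul_kron3 (c1 c2 c3 : ℝ) (X Y : Matrix m m ℝ) (Z : Matrix p p ℝ) :
    ((c1 • X) ⊗ₖ (c2 • Y)) ⊗ₖ (c3 • Z) = (c1 * c2 * c3) • (X ⊗ₖ Y ⊗ₖ Z) := by
  simp [Matrix.smul_kronecker, Matrix.kronecker_smul, smul_smul, mul_assoc, mul_comm,
    mul_left_comm]

end Helpers


/-- Lemma 3.1, estimate (3.6) for the anisotropic-Laplacian preconditioner matrix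
`A₁`, case `d = 3`: for symmetric `A_{ℓ,k}` spectrally equivalent to a symmetric
positive semidefinite `Δ`, i.e. `(1−q_A)·a⁰_{ℓ,k}•Δ ≼ A_{ℓ,k} ≼ (1+q_A)·a⁰_{ℓ,k}•Δ`,
and diagonal `D_{ℓ,k}` with `(1−q_D)·d⁰_{ℓ,k}•I ≼ D_{ℓ,k} ≼ (1+q_D)·d⁰_{ℓ,k}•I`,
with anisotropy factors `a_ℓ⁰ = Σ_k a⁰_{ℓ,k}·∏_{m≠ℓ} d⁰_{m,k}`, one has
`(1−q_A)(1−q_D)²•A₁ ≼ A ≼ (1+q_A)(1+q_D)²•A₁` in the Loewner order. -/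
theorem stmt_5 {R n : ℕ} (hR : 0 < R) (hn : 0 < n)
    (qA qD : ℝ) (hqA0 : 0 ≤ qA) (hqA1 : qA < 1) (hqD0 : 0 ≤ qD) (hqD1 : qD < 1)
    (Δ : Matrix (Fin n) (Fin n) ℝ) (hΔ : Δ.PosSemidef)
    (A1 A2 A3 D1 D2 D3 : Fin R → Matrix (Fin n) (Fin n) ℝ)
    (a1 a2 a3 d1 d2 d3 : Fin R → ℝ)
    (hA1sym : ∀ k, (A1 k).IsHermitian) (hA2sym : ∀ k, (A2 k).IsHermitian)
    (hA3sym : ∀ k, (A3 k).IsHermitian)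
    (hD1diag : ∀ k, (D1 k).IsDiag) (hD2diag : ∀ k, (D2 k).IsDiag)
    (hD3diag : ∀ k, (D3 k).IsDiag)
    (ha1 : ∀ k, 0 < a1 k) (ha2 : ∀ k, 0 < a2 k) (ha3 : ∀ k, 0 < a3 k)
    (hd1 : ∀ k, 0 < d1 k) (hd2 : ∀ k, 0 < d2 k) (hd3 : ∀ k, 0 < d3 k)
    (hA1low : ∀ k, (A1 k - ((1 - qA) * a1 k) • Δ).PosSemidef)
    (hA1up : ∀ k, (((1 + qA) * a1 k) • Δ - A1 k).PosSemidef)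
    (hA2low : ∀ k, (A2 k - ((1 - qA) * a2 k) • Δ).PosSemidef)
    (hA2up : ∀ k, (((1 + qA) * a2 k) • Δ - A2 k).PosSemidef)
    (hA3low : ∀ k, (A3 k - ((1 - qA) * a3 k) • Δ).PosSemidef)
    (hA3up : ∀ k, (((1 + qA) * a3 k) • Δ - A3 k).PosSemidef)
    (hD1low : ∀ k, (D1 k - ((1 - qD) * d1 k) • (1 : Matrix (Fin n) (Fin n) ℝ)).PosSemidef)
    (hD1up : ∀ k, (((1 + qD) * d1 k) • (1 : Matrix (Fin n) (Fin n) ℝ) - D1 k).PosSemidef)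
    (hD2low : ∀ k, (D2 k - ((1 - qD) * d2 k) • (1 : Matrix (Fin n) (Fin n) ℝ)).PosSemidef)
    (hD2up : ∀ k, (((1 + qD) * d2 k) • (1 : Matrix (Fin n) (Fin n) ℝ) - D2 k).PosSemidef)
    (hD3low : ∀ k, (D3 k - ((1 - qD) * d3 k) • (1 : Matrix (Fin n) (Fin n) ℝ)).PosSemidef)
    (hD3up : ∀ k, (((1 + qD) * d3 k) • (1 : Matrix (Fin n) (Fin n) ℝ) - D3 k).PosSemidef)
    (A A₁ : Matrix ((Fin n × Fin n) × Fin n) ((Fin n × Fin n) × Fin n) ℝ)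
    (hA : A = ∑ k, (A1 k ⊗ₖ D2 k ⊗ₖ D3 k + D1 k ⊗ₖ A2 k ⊗ₖ D3 k + D1 k ⊗ₖ D2 k ⊗ₖ A3 k))
    (hA₁ : A₁ =
      (∑ k, a1 k * (d2 k * d3 k)) • (Δ ⊗ₖ (1 : Matrix (Fin n) (Fin n) ℝ) ⊗ₖ (1 : Matrix (Fin n) (Fin n) ℝ))
      + (∑ k, a2 k * (d1 k * d3 k)) • ((1 : Matrix (Fin n) (Fin n) ℝ) ⊗ₖ Δ ⊗ₖ (1 : Matrix (Fin n) (Fin n) ℝ))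
      + (∑ k, a3 k * (d1 k * d2 k)) • ((1 : Matrix (Fin n) (Fin n) ℝ) ⊗ₖ (1 : Matrix (Fin n) (Fin n) ℝ) ⊗ₖ Δ)) :
    (A - ((1 - qA) * (1 - qD) ^ 2) • A₁).PosSemidef ∧
    (((1 + qA) * (1 + qD) ^ 2) • A₁ - A).PosSemidef := by
  have h1qD : (0:ℝ) ≤ 1 - qD := by linarith
  have h1qA : (0:ℝ) ≤ 1 - qA := by linarith
  have h1qD' : (0:ℝ) ≤ 1 + qD := by linarith
  have h1qA' : (0:ℝ) ≤ 1 + qA := by linarith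
  -- PSD of the individual matrices
  have hD1psd : ∀ k, (D1 k).PosSemidef := by
    intro k
    have h := (hD1low k).add (psd_smul (mul_nonneg h1qD (hd1 k).le) Matrix.PosSemidef.one)
    simpa using h
  have hD2psd : ∀ k, (D2 k).PosSemidef := by
    intro k
    have h := (hD2low k).add (psd_smul (mul_nonneg h1qD (hd2 k).le) Matrix.PosSemidef.one)
    simpa using h
  have hD3psd : ∀ k, (D3 k).PosSemidef := by
    intro k
    have h := (hD3low k).add (psd_smul (mul_nonneg h1qD (hd3 k).le) Matrix.PosSemidef.one)
    simpa using h
  have hA1psd : ∀ k, (A1 k).PosSemidef := by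
    intro k
    have h := (hA1low k).add (psd_smul (mul_nonneg h1qA (ha1 k).le) hΔ)
    simpa using h
  have hA2psd : ∀ k, (A2 k).PosSemidef := by
    intro k
    have h := (hA2low k).add (psd_smul (mul_nonneg h1qA (ha2 k).le) hΔ)
    simpa using h
  have hA3psd : ∀ k, (A3 k).PosSemidef := by
    intro k
    have h := (hA3low k).add (psd_smul (mul_nonneg h1qA (ha3 k).le) hΔ)
    simpa using h
  set M1 := Δ ⊗ₖ (1 : Matrix (Fin n) (Fin n) ℝ) ⊗ₖ (1 : Matrix (Fin n) (Fin n) ℝ) with hM1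
  set M2 := (1 : Matrix (Fin n) (Fin n) ℝ) ⊗ₖ Δ ⊗ₖ (1 : Matrix (Fin n) (Fin n) ℝ) with hM2
  set M3 := (1 : Matrix (Fin n) (Fin n) ℝ) ⊗ₖ (1 : Matrix (Fin n) (Fin n) ℝ) ⊗ₖ Δ with hM3
  constructor
  · -- lower bound
    have key : A - ((1 - qA) * (1 - qD) ^ 2) • A₁ =
        ∑ k, ((A1 k ⊗ₖ D2 k ⊗ₖ D3 k
              - ((1 - qA) * (1 - qD) ^ 2 * (a1 k * (d2 k * d3 k))) • M1)
            + (D1 k ⊗ₖ A2 k ⊗ₖ D3 k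
              - ((1 - qA) * (1 - qD) ^ 2 * (a2 k * (d1 k * d3 k))) • M2)
            + (D1 k ⊗ₖ D2 k ⊗ₖ A3 k
              - ((1 - qA) * (1 - qD) ^ 2 * (a3 k * (d1 k * d2 k))) • M3)) := by
      have hsplit : ((1 - qA) * (1 - qD) ^ 2) • A₁ =
          ∑ k, (((1 - qA) * (1 - qD) ^ 2 * (a1 k * (d2 k * d3 k))) • M1
              + ((1 - qA) * (1 - qD) ^ 2 * (a2 k * (d1 k * d3 k))) • M2
              + ((1 - qA) * (1 - qD) ^ 2 * (a3 k * (d1 k * d2 k))) • M3) := by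
        rw [hA₁, Finset.sum_add_distrib, Finset.sum_add_distrib]
        simp only [← Finset.sum_smul, ← Finset.mul_sum, smul_add, smul_smul]
      rw [hA, hsplit, ← Finset.sum_sub_distrib]
      refine Finset.sum_congr rfl fun k _ => ?_
      abel
    rw [key]
    refine psd_sum _ _ fun k _ => ?_
    refine Matrix.PosSemidef.add (Matrix.PosSemidef.add ?_ ?_) ?_
    · have e : ((1 - qA) * (1 - qD) ^ 2 * (a1 k * (d2 k * d3 k))) • M1 =
          ((((1 - qA) * a1 k) • Δ) ⊗ₖ (((1 - qD) * d2 k) • (1 : Matrix (Fin n) (Fin n) ℝ)))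
            ⊗ₖ (((1 - qD) * d3 k) • (1 : Matrix (Fin n) (Fin n) ℝ)) := by
        rw [smul_kron3]; congr 1; ring
      rw [e]
      exact kron3_le (psd_smul (mul_nonneg h1qA (ha1 k).le) hΔ)
        (psd_smul (mul_nonneg h1qD (hd2 k).le) Matrix.PosSemidef.one)
        (hD2psd k) (hD3psd k) (hA1low k) (hD2low k) (hD3low k)
    · have e : ((1 - qA) * (1 - qD) ^ 2 * (a2 k * (d1 k * d3 k))) • M2 =
          ((((1 - qD) * d1 k) • (1 : Matrix (Fin n) (Fin n) ℝ)) ⊗ₖ (((1 - qA) * a2 k) • Δ))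
            ⊗ₖ (((1 - qD) * d3 k) • (1 : Matrix (Fin n) (Fin n) ℝ)) := by
        rw [smul_kron3]; congr 1; ring
      rw [e]
      exact kron3_le (psd_smul (mul_nonneg h1qD (hd1 k).le) Matrix.PosSemidef.one)
        (psd_smul (mul_nonneg h1qA (ha2 k).le) hΔ)
        (hA2psd k) (hD3psd k) (hD1low k) (hA2low k) (hD3low k)
    · have e : ((1 - qA) * (1 - qD) ^ 2 * (a3 k * (d1 k * d2 k))) • M3 =
          ((((1 - qD) * d1 k) • (1 : Matrix (Fin n) (Fin n) ℝ))
            ⊗ₖ (((1 - qD) * d2 k) • (1 : Matrix (Fin n) (Fin n) ℝ)))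
            ⊗ₖ (((1 - qA) * a3 k) • Δ) := by
        rw [smul_kron3]; congr 1; ring
      rw [e]
      exact kron3_le (psd_smul (mul_nonneg h1qD (hd1 k).le) Matrix.PosSemidef.one)
        (psd_smul (mul_nonneg h1qD (hd2 k).le) Matrix.PosSemidef.one)
        (hD2psd k) (hA3psd k) (hD1low k) (hD2low k) (hA3low k)
  · -- upper bound
    have key : ((1 + qA) * (1 + qD) ^ 2) • A₁ - A =
        ∑ k, ((((1 + qA) * (1 + qD) ^ 2 * (a1 k * (d2 k * d3 k))) • M1
              - A1 k ⊗ₖ D2 k ⊗ₖ D3 k)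
            + (((1 + qA) * (1 + qD) ^ 2 * (a2 k * (d1 k * d3 k))) • M2
              - D1 k ⊗ₖ A2 k ⊗ₖ D3 k)
            + (((1 + qA) * (1 + qD) ^ 2 * (a3 k * (d1 k * d2 k))) • M3
              - D1 k ⊗ₖ D2 k ⊗ₖ A3 k)) := by
      have hsplit : ((1 + qA) * (1 + qD) ^ 2) • A₁ =
          ∑ k, (((1 + qA) * (1 + qD) ^ 2 * (a1 k * (d2 k * d3 k))) • M1
              + ((1 + qA) * (1 + qD) ^ 2 * (a2 k * (d1 k * d3 k))) • M2
              + ((1 + qA) * (1 + qD) ^ 2 * (a3 k * (d1 k * d2 k))) • M3) := by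
        rw [hA₁, Finset.sum_add_distrib, Finset.sum_add_distrib]
        simp only [← Finset.sum_smul, ← Finset.mul_sum, smul_add, smul_smul]
      rw [hA, hsplit, ← Finset.sum_sub_distrib]
      refine Finset.sum_congr rfl fun k _ => ?_
      abel
    rw [key]
    refine psd_sum _ _ fun k _ => ?_
    refine Matrix.PosSemidef.add (Matrix.PosSemidef.add ?_ ?_) ?_
    · have e : ((1 + qA) * (1 + qD) ^ 2 * (a1 k * (d2 k * d3 k))) • M1 =
          ((((1 + qA) * a1 k) • Δ) ⊗ₖ (((1 + qD) * d2 k) • (1 : Matrix (Fin n) (Fin n) ℝ)))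
            ⊗ₖ (((1 + qD) * d3 k) • (1 : Matrix (Fin n) (Fin n) ℝ)) := by
        rw [smul_kron3]; congr 1; ring
      rw [e]
      exact kron3_le (hA1psd k) (hD2psd k)
        (psd_smul (mul_nonneg h1qD' (hd2 k).le) Matrix.PosSemidef.one)
        (psd_smul (mul_nonneg h1qD' (hd3 k).le) Matrix.PosSemidef.one)
        (hA1up k) (hD2up k) (hD3up k)
    · have e : ((1 + qA) * (1 + qD) ^ 2 * (a2 k * (d1 k * d3 k))) • M2 =
          ((((1 + qD) * d1 k) • (1 : Matrix (Fin n) (Fin n) ℝ)) ⊗ₖ (((1 + qA) * a2 k) • Δ))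
            ⊗ₖ (((1 + qD) * d3 k) • (1 : Matrix (Fin n) (Fin n) ℝ)) := by
        rw [smul_kron3]; congr 1; ring
      rw [e]
      exact kron3_le (hD1psd k) (hA2psd k)
        (psd_smul (mul_nonneg h1qA' (ha2 k).le) hΔ)
        (psd_smul (mul_nonneg h1qD' (hd3 k).le) Matrix.PosSemidef.one)
        (hD1up k) (hA2up k) (hD3up k)
    · have e : ((1 + qA) * (1 + qD) ^ 2 * (a3 k * (d1 k * d2 k))) • M3 =
          ((((1 + qD) * d1 k) • (1 : Matrix (Fin n) (Fin n) ℝ))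
            ⊗ₖ (((1 + qD) * d2 k) • (1 : Matrix (Fin n) (Fin n) ℝ)))
            ⊗ₖ (((1 + qA) * a3 k) • Δ) := by
        rw [smul_kron3]; congr 1; ring
      rw [e]
      exact kron3_le (hD1psd k) (hD2psd k)
        (psd_smul (mul_nonneg h1qD' (hd2 k).le) Matrix.PosSemidef.one)
        (psd_smul (mul_nonneg h1qA' (ha3 k).le) hΔ)
        (hD1up k) (hD2up k) (hA3up k)
end

section
/- Let d ≥ 2 be a natural number, q_A, q_D ∈ [0,1), and set c := (1−q_A)(1−q_D)^{d−1} and C := (1+q_A)(1+q_D)^{d−1}. Let A and P be n×n real symmetric positive definite matrices satisfying c•P ≼ A ≼ C•P in the Loewner order. Then min{C⁻¹, c}•(P + P⁻¹) ≼ A + A⁻¹ ≼ max{C, c⁻¹}•(P + P⁻¹); consequently the generalized condition number of (P + P⁻¹)⁻¹(A + A⁻¹) is at most max{(1+q_A)(1+q_D)^{d−1}, (1−q_A)⁻¹(1−q_D)^{1−d}} / min{(1+q_A)⁻¹(1+q_D)^{1−d}, (1−q_A)(1−q_D)^{d−1}}, uniformly in n. (Theorem 3.2, bound (3.10) for the preconditioner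 B₁ = A₁ + A₁⁻¹.) -/
open Matrix

/-- Generalized condition number of the pencil `(M, N)`: the ratio of the largest
to the smallest generalized Rayleigh quotient `(xᵀMx)/(xᵀNx)` over nonzero `x`. -/
noncomputable def genCond {n : ℕ} (M N : Matrix (Fin n) (Fin n) ℝ) : ℝ :=
  sSup {r : ℝ | ∃ x : Fin n → ℝ, x ≠ 0 ∧ r = (x ⬝ᵥ M *ᵥ x) / (x ⬝ᵥ N *ᵥ x)} /
  sInf {r : ℝ | ∃ x : Fin n → ℝ, x ≠ 0 ∧ r = (x ⬝ᵥ M *ᵥ x) / (x ⬝ᵥ N *ᵥ x)}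

section Aux
variable {n : ℕ}

private lemma psd_add {A B : Matrix (Fin n) (Fin n) ℝ} (hA : A.PosSemidef) (hB : B.PosSemidef) :
    (A + B).PosSemidef := by
  exact hA.add hB

private lemma psd_smul_s10 {A : Matrix (Fin n) (Fin n) ℝ} (hA : A.PosSemidef) {r : ℝ} (hr : 0 ≤ r) :
    (r • A).PosSemidef := by
  exact hA.smul hr

private lemma pd_smul {P : Matrix (Fin n) (Fin n) ℝ} (hP : P.PosDef) {r : ℝ} (hr : 0 < r) :
    (r • P).PosDef := by
  exact hP.smul hr

private lemma pd_add {A B : Matrix (Fin n) (Fin n) ℝ} (hA : A.PosDef) (hB : B.PosDef) :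
    (A + B).PosDef := by
  exact hA.add hB

private lemma inv_anti {A B : Matrix (Fin n) (Fin n) ℝ} (hA : A.PosDef) (hB : B.PosDef)
    (h : (B - A).PosSemidef) : (A⁻¹ - B⁻¹).PosSemidef := by
  have : Invertible A := hA.isUnit.invertible
  have : Invertible B := hB.isUnit.invertible
  have key : A⁻¹ - B⁻¹ = (B⁻¹ - A⁻¹)ᴴ * A * (B⁻¹ - A⁻¹) + (B⁻¹)ᴴ * (B - A) * B⁻¹ := by
    rw [conjTranspose_sub, hB.isHermitian.inv.eq, hA.isHermitian.inv.eq]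
    simp only [Matrix.sub_mul, Matrix.mul_sub, Matrix.mul_assoc,
      Matrix.mul_inv_of_invertible, Matrix.inv_mul_of_invertible,
      Matrix.inv_mul_cancel_left_of_invertible, Matrix.mul_inv_cancel_left_of_invertible,
      Matrix.mul_one, Matrix.one_mul]
    abel
  rw [key]
  exact psd_add (hA.posSemidef.conjTranspose_mul_mul_same _) (h.conjTranspose_mul_mul_same _)

private lemma smul_inv_eq {P : Matrix (Fin n) (Fin n) ℝ} (hP : P.PosDef) {r : ℝ} (hr : 0 < r) :
    (r • P)⁻¹ = r⁻¹ • P⁻¹ := by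
  have : Invertible P := hP.isUnit.invertible
  apply Matrix.inv_eq_left_inv
  rw [Algebra.smul_mul_assoc, Algebra.mul_smul_comm, smul_smul,
    inv_mul_cancel₀ hr.ne', Matrix.inv_mul_of_invertible, one_smul]

end Aux

/-- Theorem 3.2, bound (3.10) for the preconditioner `B₁ = A₁ + A₁⁻¹`: with
`c = (1−q_A)(1−q_D)^{d−1}`, `C = (1+q_A)(1+q_D)^{d−1}` and `c•P ≼ A ≼ C•P` for
symmetric positive definite `A`, `P`, one has
`min{C⁻¹, c}•(P+P⁻¹) ≼ A+A⁻¹ ≼ max{C, c⁻¹}•(P+P⁻¹)`; consequently the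
generalized condition number of `(P+P⁻¹)⁻¹(A+A⁻¹)` is at most
`max{(1+q_A)(1+q_D)^{d−1}, (1−q_A)⁻¹(1−q_D)^{1−d}} /
 min{(1+q_A)⁻¹(1+q_D)^{1−d}, (1−q_A)(1−q_D)^{d−1}}`, uniformly in `n`. -/
theorem stmt_10 {n : ℕ} (d : ℕ) (hd : 2 ≤ d)
    (qA qD : ℝ) (hqA0 : 0 ≤ qA) (hqA1 : qA < 1) (hqD0 : 0 ≤ qD) (hqD1 : qD < 1)
    (c C : ℝ) (hc : c = (1 - qA) * (1 - qD) ^ (d - 1))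
    (hC : C = (1 + qA) * (1 + qD) ^ (d - 1))
    (A P : Matrix (Fin n) (Fin n) ℝ) (hA : A.PosDef) (hP : P.PosDef)
    (hlow : (A - c • P).PosSemidef) (hup : (C • P - A).PosSemidef) :
    ((A + A⁻¹) - min C⁻¹ c • (P + P⁻¹)).PosSemidef ∧
    (max C c⁻¹ • (P + P⁻¹) - (A + A⁻¹)).PosSemidef ∧
    genCond (A + A⁻¹) (P + P⁻¹) ≤
      max ((1 + qA) * (1 + qD) ^ (d - 1)) ((1 - qA)⁻¹ * ((1 - qD) ^ (d - 1))⁻¹) /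
        min ((1 + qA)⁻¹ * ((1 + qD) ^ (d - 1))⁻¹) ((1 - qA) * (1 - qD) ^ (d - 1)) := by
  have hc0 : 0 < c := by
    rw [hc]; exact mul_pos (by linarith) (pow_pos (by linarith) _)
  have hC0 : 0 < C := by
    rw [hC]; exact mul_pos (by linarith) (pow_pos (by linarith) _)
  set m0 : ℝ := min C⁻¹ c with hm0def
  set M0 : ℝ := max C c⁻¹ with hM0def
  have hm0 : 0 < m0 := lt_min (inv_pos.2 hC0) hc0
  have hM0 : 0 < M0 := lt_of_lt_of_le hC0 (le_max_left _ _)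
  have hcP : (c • P).PosDef := pd_smul hP hc0
  have hCP : (C • P).PosDef := pd_smul hP hC0
  -- inverse bounds
  have hInv1 : (c⁻¹ • P⁻¹ - A⁻¹).PosSemidef := by
    have := inv_anti hcP hA hlow
    rwa [smul_inv_eq hP hc0] at this
  have hInv2 : (A⁻¹ - C⁻¹ • P⁻¹).PosSemidef := by
    have := inv_anti hA hCP hup
    rwa [smul_inv_eq hP hC0] at this
  have hPpsd := hP.posSemidef
  have hPinv := hP.inv.posSemidef
  have h1 : ((A + A⁻¹) - m0 • (P + P⁻¹)).PosSemidef := by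
    have heq : (A + A⁻¹) - m0 • (P + P⁻¹) =
        ((A - c • P) + (c - m0) • P) + ((A⁻¹ - C⁻¹ • P⁻¹) + (C⁻¹ - m0) • P⁻¹) := by
      simp only [smul_add, sub_smul]
      abel
    rw [heq]
    exact psd_add (psd_add hlow (psd_smul_s10 hPpsd (by simp [hm0def, min_le_right])))
      (psd_add hInv2 (psd_smul_s10 hPinv (by simp [hm0def, min_le_left])))
  have h2 : (M0 • (P + P⁻¹) - (A + A⁻¹)).PosSemidef := by
    have heq : M0 • (P + P⁻¹) - (A + A⁻¹) =
        ((C • P - A) + (M0 - C) • P) + ((c⁻¹ • P⁻¹ - A⁻¹) + (M0 - c⁻¹) • P⁻¹) := by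
      simp only [smul_add, sub_smul]
      abel
    rw [heq]
    exact psd_add (psd_add hup (psd_smul_s10 hPpsd (by simp [hM0def, le_max_left])))
      (psd_add hInv1 (psd_smul_s10 hPinv (by simp [hM0def, le_max_right])))
  refine ⟨h1, h2, ?_⟩
  -- rewrite RHS as M0 / m0
  have hrhs : max ((1 + qA) * (1 + qD) ^ (d - 1)) ((1 - qA)⁻¹ * ((1 - qD) ^ (d - 1))⁻¹) /
      min ((1 + qA)⁻¹ * ((1 + qD) ^ (d - 1))⁻¹) ((1 - qA) * (1 - qD) ^ (d - 1)) = M0 / m0 := by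
    rw [hM0def, hm0def, hc, hC, mul_inv, mul_inv]
  rw [hrhs]
  have hN : (P + P⁻¹).PosDef := pd_add hP hP.inv
  set S := {r : ℝ | ∃ x : Fin n → ℝ, x ≠ 0 ∧
      r = (x ⬝ᵥ (A + A⁻¹) *ᵥ x) / (x ⬝ᵥ (P + P⁻¹) *ᵥ x)} with hS
  have hbound : ∀ r ∈ S, m0 ≤ r ∧ r ≤ M0 := by
    rintro r ⟨x, hx, rfl⟩
    have hNpos : 0 < x ⬝ᵥ (P + P⁻¹) *ᵥ x := by
      simpa using hN.dotProduct_mulVec_pos hx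
    constructor
    · rw [le_div_iff₀ hNpos]
      have := h1.dotProduct_mulVec_nonneg x
      simp only [star_trivial, sub_mulVec, dotProduct_sub, smul_mulVec,
        dotProduct_smul, smul_eq_mul] at this
      linarith
    · rw [div_le_iff₀ hNpos]
      have := h2.dotProduct_mulVec_nonneg x
      simp only [star_trivial, sub_mulVec, dotProduct_sub, smul_mulVec,
        dotProduct_smul, smul_eq_mul] at this
      linarith
  unfold genCond
  rcases eq_or_ne n 0 with hn | hn
  · subst hn
    have hSe : S = ∅ := by
      ext r
      simp only [hS, Set.mem_setOf_eq, Set.mem_empty_iff_false, iff_false, not_exists]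
      intro x hx
      exact hx.1 (Subsingleton.elim x 0)
    rw [← hS, hSe, Real.sSup_empty, Real.sInf_empty, zero_div]
    exact div_nonneg hM0.le hm0.le
  · have hne : S.Nonempty := by
      refine ⟨_, ⟨fun _ => 1, ?_, rfl⟩⟩
      intro h0
      have : (1 : ℝ) = 0 := congrFun h0 ⟨0, Nat.pos_of_ne_zero hn⟩
      norm_num at this
    rw [← hS]
    have hsup : sSup S ≤ M0 := Real.sSup_le (fun r hr => (hbound r hr).2) hM0.le
    have hinf : m0 ≤ sInf S := le_csInf hne (fun r hr => (hbound r hr).1)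
    exact div_le_div₀ hM0.le hsup hm0 hinf
end
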